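/- Let d be a Floer-type differential on C admitting a singular decomposition with r ≥ 1, and let β_min be its minimal bar. Then β_min = inf{ A(ȳ) − A(x̄) : x̄, ȳ capped orbits with ⟨d x̄, ȳ⟩ = 1 } = inf{ A(d ξ) − A(ξ) : ξ ∈ C, d ξ ≠ 0 }. -/

import Mathlib

/-!  Common setup: `Λ := LaurentSeries (ZMod 2)`, `C := Fin n → Λ`, the action
functional `A`, orthogonality, capped orbits, the pairing `⟨d x̄, ȳ⟩`,
Floer-type differentials and singular decompositions. -/

noncomputable section

/-- The Novikov field `Λ = 𝔽₂((q))`, realized as formal Laurent series over `ZMod 2`. -/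
abbrev Lam : Type := LaurentSeries (ZMod 2)

open Classical in
/-- The action `A : C → ℝ ∪ {+∞}`: `A 0 = ⊤` and for `ξ ≠ 0`,
`A ξ = min { a i + λ₀ • ord (ξ i) | ξ i ≠ 0 }`. -/
def actA (n : ℕ) (lam0 : ℝ) (a : Fin n → ℝ) (xi : Fin n → Lam) : WithTop ℝ :=
  Finset.univ.inf fun i : Fin n =>
    if xi i = 0 then (⊤ : WithTop ℝ)
    else ((a i + lam0 * ((xi i).order : ℝ) : ℝ) : WithTop ℝ)

/-- A finite family `(ξ j)` of vectors of `C` is orthogonal if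
`A (∑ λ_j • ξ_j) = min_j A (λ_j • ξ_j)` for all coefficients `λ_j ∈ Λ`. -/
def IsOrthogonalFamily (n : ℕ) (lam0 : ℝ) (a : Fin n → ℝ) {ι : Type} [Fintype ι]
    (xi : ι → (Fin n → Lam)) : Prop :=
  ∀ c : ι → Lam,
    actA n lam0 a (∑ j, c j • xi j) = Finset.univ.inf fun j => actA n lam0 a (c j • xi j)

/-- The capped orbit `q^k eᵢ`. -/
def cappedOrbit (n : ℕ) (i : Fin n) (k : ℤ) : Fin n → Lam :=
  Pi.single i (HahnSeries.single k 1)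

/-- `⟨d x̄, ȳ⟩ ∈ 𝔽₂` for `x̄ = q^k eᵢ` and `ȳ = q^l eⱼ`: the `(l - k)`-th Laurent
coefficient of the `j`-th component of `d eᵢ`. -/
def pairing (n : ℕ) (d : (Fin n → Lam) →ₗ[Lam] (Fin n → Lam)) (i j : Fin n) (k l : ℤ) :
    ZMod 2 :=
  ((d (Pi.single i 1)) j).coeff (l - k)

/-- The set of arrow lengths `A ȳ - A x̄` over pairs of capped orbits with `⟨d x̄, ȳ⟩ = 1`. -/
def arrowLengths (n : ℕ) (lam0 : ℝ) (a : Fin n → ℝ)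
    (d : (Fin n → Lam) →ₗ[Lam] (Fin n → Lam)) : Set ℝ :=
  {t : ℝ | ∃ (i j : Fin n) (k l : ℤ),
    pairing n d i j k l = 1 ∧ t = (a j + lam0 * l) - (a i + lam0 * k)}

/-- The set of values `A (d ξ) - A ξ` over `ξ ∈ C` with `d ξ ≠ 0`. -/
def actionGaps (n : ℕ) (lam0 : ℝ) (a : Fin n → ℝ)
    (d : (Fin n → Lam) →ₗ[Lam] (Fin n → Lam)) : Set ℝ :=
  {t : ℝ | ∃ xi : Fin n → Lam, d xi ≠ 0 ∧
    actA n lam0 a (d xi) = actA n lam0 a xi + (t : WithTop ℝ)}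

/-- A Floer-type differential on `C`: a `Λ`-linear map squaring to zero that strictly
increases the action. -/
def IsFloerDifferential (n : ℕ) (lam0 : ℝ) (a : Fin n → ℝ)
    (d : (Fin n → Lam) →ₗ[Lam] (Fin n → Lam)) : Prop :=
  d ∘ₗ d = 0 ∧
    ∀ xi : Fin n → Lam, xi ≠ 0 → d xi ≠ 0 → actA n lam0 a xi < actA n lam0 a (d xi)

/-- A singular decomposition of `(C, d)`: `p + 2r = n` and an orthogonal basis
`α₁,…,α_p, η₁,…,η_r, γ₁,…,γ_r` of `C` over `Λ` with `d αᵢ = 0` and `d ηⱼ = γⱼ`. -/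
def IsSingularDecomposition (n : ℕ) (lam0 : ℝ) (a : Fin n → ℝ)
    (d : (Fin n → Lam) →ₗ[Lam] (Fin n → Lam)) (p r : ℕ)
    (alpha : Fin p → (Fin n → Lam)) (eta gamma : Fin r → (Fin n → Lam)) : Prop :=
  p + 2 * r = n ∧
  IsOrthogonalFamily n lam0 a (Sum.elim alpha (Sum.elim eta gamma)) ∧
  LinearIndependent Lam (Sum.elim alpha (Sum.elim eta gamma)) ∧
  Submodule.span Lam (Set.range (Sum.elim alpha (Sum.elim eta gamma))) = ⊤ ∧
  (∀ i, d (alpha i) = 0) ∧ (∀ j, d (eta j) = gamma j)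

/-- The set of bars `A (γ j) - A (η j)` of a singular decomposition; its infimum is the
minimal bar `β_min` when `r ≥ 1`. -/
def barSet (n : ℕ) (lam0 : ℝ) (a : Fin n → ℝ) {r : ℕ}
    (eta gamma : Fin r → (Fin n → Lam)) : Set ℝ :=
  {t : ℝ | ∃ j : Fin r, actA n lam0 a (gamma j) = actA n lam0 a (eta j) + (t : WithTop ℝ)}

end

section Helpers


variable (n : ℕ) (lam0 : ℝ) (a : Fin n → ℝ)

lemma myZMod2 (x : ZMod 2) (h : x ≠ 0) : x = 1 := by revert x h; decide

lemma actA_zero : actA n lam0 a 0 = ⊤ := by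
  classical
  simp [actA]

lemma actA_le (xi : Fin n → Lam) (i : Fin n) (h : xi i ≠ 0) :
    actA n lam0 a xi ≤ ((a i + lam0 * ((xi i).order : ℝ) : ℝ) : WithTop ℝ) := by
  classical
  refine le_trans (Finset.inf_le (Finset.mem_univ i)) ?_
  simp [h]

lemma actA_exists_min (xi : Fin n → Lam) (h : xi ≠ 0) :
    ∃ i, xi i ≠ 0 ∧
      actA n lam0 a xi = ((a i + lam0 * ((xi i).order : ℝ) : ℝ) : WithTop ℝ) := by
  classical
  obtain ⟨i0, hi0⟩ := Function.ne_iff.mp h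
  have hne : (Finset.univ : Finset (Fin n)).Nonempty := ⟨i0, Finset.mem_univ i0⟩
  obtain ⟨i, -, hi⟩ := Finset.exists_mem_eq_inf (Finset.univ : Finset (Fin n)) hne
    (fun i => if xi i = 0 then (⊤ : WithTop ℝ)
      else ((a i + lam0 * ((xi i).order : ℝ) : ℝ) : WithTop ℝ))
  by_cases hxi : xi i = 0
  · exfalso
    have h1 : actA n lam0 a xi = ⊤ := by rw [actA, hi, if_pos hxi]
    have h2 := actA_le n lam0 a xi i0 hi0
    rw [h1] at h2
    exact WithTop.not_top_le_coe _ h2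
  · exact ⟨i, hxi, by rw [actA, hi, if_neg hxi]⟩

lemma actA_exists_real (xi : Fin n → Lam) (h : xi ≠ 0) :
    ∃ x : ℝ, actA n lam0 a xi = (x : WithTop ℝ) := by
  obtain ⟨i, -, hi⟩ := actA_exists_min n lam0 a xi h
  exact ⟨_, hi⟩

lemma coe_add_finset_inf {ι : Type} (c : ℝ) (s : Finset ι) (f : ι → WithTop ℝ) :
    (c : WithTop ℝ) + s.inf f = s.inf fun i => (c : WithTop ℝ) + f i := by
  classical
  induction s using Finset.induction with
  | empty => simp
  | insert _ _ ha ih =>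
      rw [Finset.inf_insert, Finset.inf_insert, ← ih]
      exact Monotone.map_min (fun x y hxy => add_le_add_right hxy _)

lemma actA_smul (lam : Lam) (hlam : lam ≠ 0) (xi : Fin n → Lam) :
    actA n lam0 a (lam • xi)
      = ((lam0 * (lam.order : ℝ) : ℝ) : WithTop ℝ) + actA n lam0 a xi := by
  classical
  rw [actA, actA, coe_add_finset_inf]
  refine Finset.inf_congr rfl fun i _ => ?_
  by_cases h : xi i = 0
  · simp [h]
  · have hmul : lam * xi i ≠ 0 := mul_ne_zero hlam h
    simp only [Pi.smul_apply, smul_eq_mul]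
    rw [if_neg hmul, if_neg h, ← WithTop.coe_add, WithTop.coe_inj,
      HahnSeries.order_mul hlam h]
    push_cast
    ring

lemma actA_single (i : Fin n) (x : Lam) (hx : x ≠ 0) :
    actA n lam0 a (Pi.single i x)
      = ((a i + lam0 * (x.order : ℝ) : ℝ) : WithTop ℝ) := by
  classical
  refine le_antisymm ?_ ?_
  · have := actA_le n lam0 a (Pi.single i x) i (by simpa using hx)
    simpa using this
  · rw [actA]
    refine Finset.le_inf fun i' _ => ?_
    by_cases h : i' = i
    · subst h; simp [hx]
    · simp [Pi.single_eq_of_ne h]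

lemma zero_smul_vec (v : Fin n → Lam) : (0 : Lam) • v = 0 := zero_smul Lam v

lemma smul_pi_single (c : Lam) (i : Fin n) (x : Lam) :
    c • (Pi.single i x : Fin n → Lam) = Pi.single i (c * x) := by
  ext j
  by_cases h : j = i
  · subst h; simp
  · simp [Pi.single_eq_of_ne h]

end Helpers

/-- For a Floer-type differential `d` on `C` with a singular
decomposition with `r ≥ 1`, the minimal bar `β_min` equals the infimum of
`A ȳ - A x̄` over pairs of capped orbits with `⟨d x̄, ȳ⟩ = 1`, and also equals the
infimum of `A (d ξ) - A ξ` over `ξ` with `d ξ ≠ 0`. -/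
theorem minimalBar_eq_sInf (n : ℕ) (lam0 : ℝ) (hlam0 : 0 < lam0) (a : Fin n → ℝ)
    (d : (Fin n → Lam) →ₗ[Lam] (Fin n → Lam))
    (hFloer : IsFloerDifferential n lam0 a d)
    (p r : ℕ) (hr : 1 ≤ r)
    (alpha : Fin p → (Fin n → Lam)) (eta gamma : Fin r → (Fin n → Lam))
    (hdec : IsSingularDecomposition n lam0 a d p r alpha eta gamma) :
    sInf (barSet n lam0 a eta gamma) = sInf (arrowLengths n lam0 a d) ∧
    sInf (barSet n lam0 a eta gamma) = sInf (actionGaps n lam0 a d) := by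
  classical
  obtain ⟨hd2, -⟩ := hFloer
  obtain ⟨-, horth, hli, hspan, hα, hηd⟩ := hdec
  set v : Fin p ⊕ (Fin r ⊕ Fin r) → (Fin n → Lam) :=
    Sum.elim alpha (Sum.elim eta gamma) with hv
  have hγne : ∀ j, gamma j ≠ 0 := fun j => by
    simpa [hv] using hli.ne_zero (Sum.inr (Sum.inr j))
  have hηne : ∀ j, eta j ≠ 0 := fun j => by
    simpa [hv] using hli.ne_zero (Sum.inr (Sum.inl j))
  have hdγ : ∀ j, d (gamma j) = 0 := fun j => by
    have := LinearMap.congr_fun hd2 (eta j)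
    simpa [LinearMap.comp_apply, hηd j] using this
  choose g hg using fun j => actA_exists_real n lam0 a (gamma j) (hγne j)
  choose hh hhh using fun j => actA_exists_real n lam0 a (eta j) (hηne j)
  set T : Fin r → ℝ := fun j => g j - hh j with hTdef
  have hTj : ∀ j, actA n lam0 a (gamma j)
      = actA n lam0 a (eta j) + ((T j : ℝ) : WithTop ℝ) := fun j => by
    rw [hg j, hhh j, ← WithTop.coe_add, WithTop.coe_inj]
    show g j = hh j + (g j - hh j)
    ring
  haveI : Nonempty (Fin r) := ⟨⟨0, hr⟩⟩
  obtain ⟨j0, hj0⟩ := Finite.exists_min T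
  set β := T j0 with hβ
  -- the key action estimate
  have key : ∀ xi : Fin n → Lam,
      actA n lam0 a xi + ((β : ℝ) : WithTop ℝ) ≤ actA n lam0 a (d xi) := by
    intro xi
    have hmem : xi ∈ Submodule.span Lam (Set.range v) := by
      rw [hspan]; exact Submodule.mem_top
    obtain ⟨c, hc⟩ := (Submodule.mem_span_range_iff_exists_fun Lam).mp hmem
    set c' : Fin p ⊕ (Fin r ⊕ Fin r) → Lam :=
      Sum.elim 0 (Sum.elim 0 fun j => c (Sum.inr (Sum.inl j))) with hc'
    have hdxi : d xi = ∑ i, c' i • v i := by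
      have h1 : d xi = ∑ i, c i • d (v i) := by
        rw [← hc, map_sum]; simp only [map_smul]
      rw [h1]
      simp only [Fintype.sum_sum_type]
      simp [hc', hv, hα, hηd, hdγ, zero_smul_vec]
    have h1 := horth c'
    have h2 := horth c
    rw [hc] at h2
    rw [hdxi, h1]
    refine Finset.le_inf fun i _ => ?_
    rcases i with i | j | j
    · simp [hc', zero_smul_vec, actA_zero]
    · simp [hc', zero_smul_vec, actA_zero]
    · by_cases hcj : c (Sum.inr (Sum.inl j)) = 0
      · simp [hc', hcj, zero_smul_vec, actA_zero]
      · have e1 : actA n lam0 a (c' (Sum.inr (Sum.inr j)) • v (Sum.inr (Sum.inr j)))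
            = actA n lam0 a (c (Sum.inr (Sum.inl j)) • eta j) + ((T j : ℝ) : WithTop ℝ) := by
          show actA n lam0 a (c (Sum.inr (Sum.inl j)) • gamma j) = _
          rw [actA_smul n lam0 a _ hcj, actA_smul n lam0 a _ hcj, hTj j, add_assoc]
        rw [e1]
        have hx : actA n lam0 a xi ≤ actA n lam0 a (c (Sum.inr (Sum.inl j)) • eta j) := by
          rw [h2]
          exact Finset.inf_le (Finset.mem_univ (Sum.inr (Sum.inl j)))
        exact add_le_add hx (WithTop.coe_le_coe.mpr (hj0 j))
  have hdη0 : d (eta j0) = gamma j0 := hηd j0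
  -- barSet
  have hbar : IsLeast (barSet n lam0 a eta gamma) β := by
    constructor
    · exact ⟨j0, hTj j0⟩
    · rintro t ⟨j, hjt⟩
      have h' := (hTj j).symm.trans hjt
      rw [hhh j, ← WithTop.coe_add, ← WithTop.coe_add, WithTop.coe_inj] at h'
      have ht : t = T j := by linarith
      rw [ht]; exact hj0 j
  -- actionGaps
  have hgap : IsLeast (actionGaps n lam0 a d) β := by
    constructor
    · exact ⟨eta j0, by rw [hdη0]; exact hγne j0, by rw [hdη0]; exact hTj j0⟩
    · rintro t ⟨xi, hdne, hteq⟩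
      have hxine : xi ≠ 0 := fun h0 => hdne (by rw [h0, map_zero])
      obtain ⟨x, hx⟩ := actA_exists_real n lam0 a xi hxine
      have hk := key xi
      rw [hteq, hx, ← WithTop.coe_add, ← WithTop.coe_add, WithTop.coe_le_coe] at hk
      linarith
  -- arrowLengths : lower bound
  have harrLB : ∀ t ∈ arrowLengths n lam0 a d, β ≤ t := by
    rintro t ⟨i, j, k, l, hpair, rfl⟩
    set xi : Fin n → Lam := Pi.single i (HahnSeries.single k 1) with hxidef
    have hsne : (HahnSeries.single k 1 : Lam) ≠ 0 := HahnSeries.single_ne_zero one_ne_zero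
    have hAxi : actA n lam0 a xi = ((a i + lam0 * (k : ℝ) : ℝ) : WithTop ℝ) := by
      rw [hxidef, actA_single n lam0 a i _ hsne, HahnSeries.order_single one_ne_zero]
    have hxie : xi = (HahnSeries.single k 1 : Lam) • (Pi.single i 1 : Fin n → Lam) := by
      rw [hxidef, smul_pi_single, mul_one]
    have h1 : ((HahnSeries.single k (1 : ZMod 2) : Lam) * (d (Pi.single i 1)) j).coeff (l - k + k)
        = ((d (Pi.single i 1)) j).coeff (l - k) := by
      rw [HahnSeries.coeff_single_mul_add, one_mul]
    have h2 : l - k + k = l := by ring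
    rw [h2] at h1
    have hco : ((d xi) j).coeff l ≠ 0 := by
      have hco1 : ((d xi) j).coeff l = pairing n d i j k l := by
        rw [hxie, map_smul]
        exact h1
      rw [hco1, hpair]
      exact one_ne_zero
    have hdjne : (d xi) j ≠ 0 := fun h0 => hco (by rw [h0]; simp)
    have hAd : actA n lam0 a (d xi) ≤ ((a j + lam0 * (l : ℝ) : ℝ) : WithTop ℝ) := by
      refine le_trans (actA_le n lam0 a (d xi) j hdjne) ?_
      refine WithTop.coe_le_coe.mpr ?_
      have hordle : ((d xi) j).order ≤ l := HahnSeries.order_le_of_coeff_ne_zero hco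
      have hcast : ((((d xi) j).order : ℤ) : ℝ) ≤ (l : ℝ) := by exact_mod_cast hordle
      have := mul_le_mul_of_nonneg_left hcast hlam0.le
      linarith
    have hk2 := le_trans (key xi) hAd
    rw [hAxi, ← WithTop.coe_add, WithTop.coe_le_coe] at hk2
    linarith
  -- arrowLengths : membership of β
  have harrMem : β ∈ arrowLengths n lam0 a d := by
    have hdne : d (eta j0) ≠ 0 := by rw [hdη0]; exact hγne j0
    obtain ⟨jm, hjmne, hjm⟩ := actA_exists_min n lam0 a (d (eta j0)) hdne
    set w : Fin n → Lam := d (eta j0) with hw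
    set m : ℤ := (w jm).order with hm
    have hcoeffm : (w jm).coeff m ≠ 0 := HahnSeries.coeff_order_eq_zero.not.mpr hjmne
    have hxisum : eta j0 = ∑ i, (eta j0 i) • (Pi.single i 1 : Fin n → Lam) := by
      conv_lhs => rw [← Finset.univ_sum_single (eta j0)]
      exact Finset.sum_congr rfl fun i _ => by rw [smul_pi_single, mul_one]
    have hdsum : w jm = ∑ i, (eta j0 i) * ((d (Pi.single i 1)) jm) := by
      have hstep : w = ∑ i, (eta j0 i) • d (Pi.single i 1) := by
        rw [hw]
        conv_lhs => rw [hxisum]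
        rw [map_sum]; simp only [map_smul]
      rw [hstep, Finset.sum_apply]
      rfl
    have hsumco : (∑ i, (eta j0 i) * ((d (Pi.single i 1)) jm)).coeff m ≠ 0 := by
      rw [← hdsum]; exact hcoeffm
    have hco2 : ∑ i, ((eta j0 i) * ((d (Pi.single i 1)) jm)).coeff m ≠ 0 := by
      have hms := map_sum (HahnSeries.coeff.addMonoidHom m)
        (fun i => (eta j0 i) * ((d (Pi.single i 1)) jm)) Finset.univ
      intro h0
      exact hsumco (hms.trans h0)
    obtain ⟨i0, -, hi0⟩ := Finset.exists_ne_zero_of_sum_ne_zero hco2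
    rw [HahnSeries.coeff_mul] at hi0
    obtain ⟨pq, hpqmem, hpqne⟩ := Finset.exists_ne_zero_of_sum_ne_zero hi0
    rw [Finset.mem_addAntidiagonal] at hpqmem
    obtain ⟨hp1, hp2, hpsum⟩ := hpqmem
    have hxc : (eta j0 i0).coeff pq.1 ≠ 0 := hp1
    have hwc : ((d (Pi.single i0 1)) jm).coeff pq.2 ≠ 0 := hp2
    have hpairval : pairing n d i0 jm pq.1 m = 1 := by
      apply myZMod2
      show ((d (Pi.single i0 1)) jm).coeff (m - pq.1) ≠ 0
      rw [show m - pq.1 = pq.2 by omega]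
      exact hwc
    set t : ℝ := (a jm + lam0 * (m : ℝ)) - (a i0 + lam0 * ((pq.1 : ℤ) : ℝ)) with htdef
    have htmem : t ∈ arrowLengths n lam0 a d := ⟨i0, jm, pq.1, m, hpairval, rfl⟩
    have hxine : eta j0 i0 ≠ 0 := fun h0 => hxc (by rw [h0]; simp)
    have hAle : actA n lam0 a (eta j0) ≤ ((a i0 + lam0 * ((pq.1 : ℤ) : ℝ) : ℝ) : WithTop ℝ) := by
      refine le_trans (actA_le n lam0 a (eta j0) i0 hxine) ?_
      refine WithTop.coe_le_coe.mpr ?_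
      have hordle : (eta j0 i0).order ≤ pq.1 := HahnSeries.order_le_of_coeff_ne_zero hxc
      have hcast : (((eta j0 i0).order : ℤ) : ℝ) ≤ ((pq.1 : ℤ) : ℝ) := by exact_mod_cast hordle
      have := mul_le_mul_of_nonneg_left hcast hlam0.le
      linarith
    rw [hhh j0] at hAle
    have hAle' : hh j0 ≤ a i0 + lam0 * ((pq.1 : ℤ) : ℝ) := WithTop.coe_le_coe.mp hAle
    have hAdβ : actA n lam0 a w = ((hh j0 + β : ℝ) : WithTop ℝ) := by
      rw [hdη0, hTj j0, hhh j0, ← WithTop.coe_add]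
    have heq : a jm + lam0 * (m : ℝ) = hh j0 + β :=
      WithTop.coe_inj.mp (hjm.symm.trans hAdβ)
    have htle : t ≤ β := by rw [htdef]; linarith
    have hteq : t = β := le_antisymm htle (harrLB t htmem)
    exact hteq ▸ htmem
  have harr : IsLeast (arrowLengths n lam0 a d) β := ⟨harrMem, harrLB⟩
  exact ⟨hbar.csInf_eq.trans harr.csInf_eq.symm, hbar.csInf_eq.trans hgap.csInf_eq.symm⟩
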